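/- Let (A,C)_ψ be an entwining structure with C finitely generated projective over k, and X = C^{*op}#_ψ̄A. Then the category of entwined (A,C)_ψ-modules is isomorphic to the category of right X-modules: every entwined module M becomes an X-module via m·(ξ⊗a) = m₍₀₎·a ⟨m₍₁₎, ξ⟩, and conversely every right X-module becomes an entwined module with coaction determined by ⟨m₍₁₎, ξ⟩ m₍₀₎ = m·ξ; these assignments are mutually inverse and identity on morphisms. -/

import Mathlib

open TensorProduct LinearMap

noncomputable section

variable (k A C : Type*) [CommRing k] [Ring A] [Algebra k A]
  [AddCommGroup C] [Module k C] [Coalgebra k C]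

/-- An entwining structure `(A,C)_ψ` over `k`. -/
structure Entwining where
  psi : C ⊗[k] A →ₗ[k] A ⊗[k] C
  mul_compat :
    psi ∘ₗ lTensor C (LinearMap.mul' k A)
      = rTensor C (LinearMap.mul' k A)
        ∘ₗ (TensorProduct.assoc k A A C).symm.toLinearMap
        ∘ₗ lTensor A psi
        ∘ₗ (TensorProduct.assoc k A C A).toLinearMap
        ∘ₗ rTensor A psi
        ∘ₗ (TensorProduct.assoc k C A A).symm.toLinearMap
  one_compat : ∀ c : C, psi (c ⊗ₜ[k] (1 : A)) = (1 : A) ⊗ₜ[k] c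
  comul_compat :
    lTensor A (Coalgebra.comul (R := k) (A := C)) ∘ₗ psi
      = (TensorProduct.assoc k A C C).toLinearMap
        ∘ₗ rTensor C psi
        ∘ₗ (TensorProduct.assoc k C A C).symm.toLinearMap
        ∘ₗ lTensor C psi
        ∘ₗ (TensorProduct.assoc k C C A).toLinearMap
        ∘ₗ rTensor A (Coalgebra.comul (R := k) (A := C))
  counit_compat : ∀ (c : C) (a : A),
    (TensorProduct.rid k A)
        ((lTensor A (Coalgebra.counit (R := k) (A := C))) (psi (c ⊗ₜ[k] a)))
      = Coalgebra.counit (R := k) c • a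

variable {k A C} in
/-- `act` is a unital associative right `A`-action on `M`. -/
def IsRAction {M : Type*} [AddCommGroup M] [Module k M]
    (act : M ⊗[k] A →ₗ[k] M) : Prop :=
  (∀ m : M, act (m ⊗ₜ[k] (1 : A)) = m) ∧
  act ∘ₗ lTensor M (LinearMap.mul' k A)
    = act ∘ₗ rTensor A act ∘ₗ (TensorProduct.assoc k M A A).symm.toLinearMap

variable {k A C} in
/-- `coact` is a counital coassociative right `C`-coaction on `M`. -/
def IsRCoaction {M : Type*} [AddCommGroup M] [Module k M]
    (coact : M →ₗ[k] M ⊗[k] C) : Prop :=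
  (∀ m : M, (TensorProduct.rid k M)
      ((lTensor M (Coalgebra.counit (R := k) (A := C))) (coact m)) = m) ∧
  rTensor C coact ∘ₗ coact
    = (TensorProduct.assoc k M C C).symm.toLinearMap
      ∘ₗ lTensor M (Coalgebra.comul (R := k) (A := C)) ∘ₗ coact

variable {k A C} in
/-- The compatibility condition making `(M, act, coact)` an entwined
`(A,C)_ψ`-module: `ρ^M(m·a) = m₍₀₎·a_α ⊗ m₍₁₎^α`. -/
def IsEntwinedModule (E : Entwining k A C) {M : Type*} [AddCommGroup M] [Module k M]
    (act : M ⊗[k] A →ₗ[k] M) (coact : M →ₗ[k] M ⊗[k] C) : Prop :=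
  IsRAction act ∧ IsRCoaction coact ∧
  coact ∘ₗ act
    = rTensor C act
      ∘ₗ (TensorProduct.assoc k M A C).symm.toLinearMap
      ∘ₗ lTensor M E.psi
      ∘ₗ (TensorProduct.assoc k M C A).toLinearMap
      ∘ₗ rTensor A coact

variable {k A C} in
/-- A morphism of entwined modules: right `A`-linear and right `C`-colinear. -/
def IsEntwinedHom {M N : Type*} [AddCommGroup M] [Module k M]
    [AddCommGroup N] [Module k N]
    (actM : M ⊗[k] A →ₗ[k] M) (coactM : M →ₗ[k] M ⊗[k] C)
    (actN : N ⊗[k] A →ₗ[k] N) (coactN : N →ₗ[k] N ⊗[k] C)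
    (f : M →ₗ[k] N) : Prop :=
  (f ∘ₗ actM = actN ∘ₗ rTensor A f) ∧ (coactN ∘ₗ f = rTensor C f ∘ₗ coactM)

variable {k A C} in
/-- Evaluation of the first (dual) factor at `c`: `ξ ⊗ a ↦ ξ(c) • a`. -/
def evFst (c : C) : Module.Dual k C ⊗[k] A →ₗ[k] A :=
  TensorProduct.lift ((LinearMap.lsmul k A) ∘ₗ
    (LinearMap.applyₗ (R := k) c : (C →ₗ[k] k) →ₗ[k] k))

variable {k A C} in
/-- Evaluation of the second (coalgebra) factor against `ξ`: `a ⊗ c ↦ ξ(c) • a`. -/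
def evSnd (ξ : Module.Dual k C) : A ⊗[k] C →ₗ[k] A :=
  (TensorProduct.rid k A).toLinearMap ∘ₗ lTensor A ξ

variable {k A C} in
/-- `ψ̄ : A ⊗ C* → C* ⊗ A` is a factorisation map for the entwining `ψ`:
`⟨c^α, ξ⟩ a_α = ξ_i(c) a^i`. -/
def IsFactorisation (E : Entwining k A C)
    (ψbar : A ⊗[k] Module.Dual k C →ₗ[k] Module.Dual k C ⊗[k] A) : Prop :=
  ∀ (a : A) (ξ : Module.Dual k C) (c : C),
    evFst c (ψbar (a ⊗ₜ[k] ξ)) = evSnd ξ (E.psi (c ⊗ₜ[k] a))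

/-- The product of `B = C^{*op}`, i.e. the opposite convolution product:
`⟨c, b b'⟩ = ⟨c₍₂₎, b⟩ ⟨c₍₁₎, b'⟩`, as a linear map `B ⊗ B →ₗ B`. -/
def opConv : Module.Dual k C ⊗[k] Module.Dual k C →ₗ[k] Module.Dual k C :=
  ((LinearMap.llcomp k C (C ⊗[k] C) k).flip (Coalgebra.comul (R := k) (A := C)))
  ∘ₗ (LinearMap.llcomp k (C ⊗[k] C) (k ⊗[k] k) k (LinearMap.mul' k k))
  ∘ₗ TensorProduct.homTensorHomMap (RingHom.id k) C C k k
  ∘ₗ (TensorProduct.comm k (Module.Dual k C) (Module.Dual k C)).toLinearMap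

variable {k A C} in
/-- The multiplication of the smash product `B #_ψ̄ A` on `B ⊗ A`, `B = C^{*op}`:
`(b ⊗ a)(b' ⊗ a') = b ψ̄(a ⊗ b') a'`. -/
def smashMul (ψbar : A ⊗[k] Module.Dual k C →ₗ[k] Module.Dual k C ⊗[k] A) :
    (Module.Dual k C ⊗[k] A) ⊗[k] (Module.Dual k C ⊗[k] A) →ₗ[k]
      Module.Dual k C ⊗[k] A :=
  rTensor A (opConv k C)
  ∘ₗ (TensorProduct.assoc k (Module.Dual k C) (Module.Dual k C) A).symm.toLinearMap
  ∘ₗ lTensor (Module.Dual k C) (lTensor (Module.Dual k C) (LinearMap.mul' k A))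
  ∘ₗ lTensor (Module.Dual k C) (TensorProduct.assoc k (Module.Dual k C) A A).toLinearMap
  ∘ₗ lTensor (Module.Dual k C) (rTensor A ψbar)
  ∘ₗ lTensor (Module.Dual k C) (TensorProduct.assoc k A (Module.Dual k C) A).symm.toLinearMap
  ∘ₗ (TensorProduct.assoc k (Module.Dual k C) A (Module.Dual k C ⊗[k] A)).toLinearMap

/-- The unit `ε ⊗ 1_A` of the smash product. -/
def smashOne : Module.Dual k C ⊗[k] A :=
  (Coalgebra.counit (R := k) (A := C)) ⊗ₜ[k] (1 : A)

variable {k A C} in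
/-- The map `X ⊗ B → X` underlying the right `X`-action on `Hom(B,N)`:
`(b ⊗ a) ⊗ b' ↦ (b b'_i) ⊗ a^i` where `ψ̄(a ⊗ b') = b'_i ⊗ a^i`. -/
def homActAux (ψbar : A ⊗[k] Module.Dual k C →ₗ[k] Module.Dual k C ⊗[k] A) :
    (Module.Dual k C ⊗[k] A) ⊗[k] Module.Dual k C →ₗ[k]
      Module.Dual k C ⊗[k] A :=
  rTensor A (opConv k C)
  ∘ₗ (TensorProduct.assoc k (Module.Dual k C) (Module.Dual k C) A).symm.toLinearMap
  ∘ₗ lTensor (Module.Dual k C) ψbar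
  ∘ₗ (TensorProduct.assoc k (Module.Dual k C) A (Module.Dual k C)).toLinearMap

variable {k A C} in
/-- The right `X`-action on `Hom(B,N)` (`X = B #_ψ̄ A`, `B = C^{*op}`, `N` a
right `A`-module): `(f · (b ⊗ a))(b') = f(b b'_i) · a^i`. -/
def homAct {N : Type*} [AddCommGroup N] [Module k N]
    (actN : N ⊗[k] A →ₗ[k] N)
    (ψbar : A ⊗[k] Module.Dual k C →ₗ[k] Module.Dual k C ⊗[k] A)
    (f : Module.Dual k C →ₗ[k] N) (x : Module.Dual k C ⊗[k] A) :
    Module.Dual k C →ₗ[k] N :=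
  actN ∘ₗ rTensor A f ∘ₗ homActAux ψbar
    ∘ₗ TensorProduct.mk k (Module.Dual k C ⊗[k] A) (Module.Dual k C) x

variable {k A C} in
/-- `actX` is a unital associative right action of the smash product
`X = B #_ψ̄ A` on `M`. -/
def IsSmashAction (ψbar : A ⊗[k] Module.Dual k C →ₗ[k] Module.Dual k C ⊗[k] A)
    {M : Type*} [AddCommGroup M] [Module k M]
    (actX : M ⊗[k] (Module.Dual k C ⊗[k] A) →ₗ[k] M) : Prop :=
  (∀ m : M, actX (m ⊗ₜ[k] smashOne k A C) = m) ∧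
  actX ∘ₗ lTensor M (smashMul ψbar)
    = actX ∘ₗ rTensor (Module.Dual k C ⊗[k] A) actX
      ∘ₗ (TensorProduct.assoc k M (Module.Dual k C ⊗[k] A)
          (Module.Dual k C ⊗[k] A)).symm.toLinearMap

variable {k A C} in
/-- `f : M → Hom(B,N)` is a morphism of right `X`-modules. -/
def IsHomBXLinear (ψbar : A ⊗[k] Module.Dual k C →ₗ[k] Module.Dual k C ⊗[k] A)
    {M N : Type*} [AddCommGroup M] [Module k M] [AddCommGroup N] [Module k N]
    (actX : M ⊗[k] (Module.Dual k C ⊗[k] A) →ₗ[k] M)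
    (actN : N ⊗[k] A →ₗ[k] N)
    (f : M →ₗ[k] (Module.Dual k C →ₗ[k] N)) : Prop :=
  ∀ (m : M) (x : Module.Dual k C ⊗[k] A),
    f (actX (m ⊗ₜ[k] x)) = homAct actN ψbar (f m) x

variable {k A C} in
/-- The evaluation pairing `C ⊗ C* → k`. -/
def pairCD : C ⊗[k] Module.Dual k C →ₗ[k] k :=
  TensorProduct.lift (Module.Dual.eval k C)

variable {k A C} in
/-- The right `X`-action (`X = C^{*op} #_ψ̄ A`) induced on an entwined module:
`m · (ξ ⊗ a) = m₍₀₎ · a ⟨m₍₁₎, ξ⟩`. -/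
def inducedSmashAction {M : Type*} [AddCommGroup M] [Module k M]
    (actM : M ⊗[k] A →ₗ[k] M) (coactM : M →ₗ[k] M ⊗[k] C) :
    M ⊗[k] (Module.Dual k C ⊗[k] A) →ₗ[k] M :=
  actM
  ∘ₗ lTensor M (TensorProduct.lid k A).toLinearMap
  ∘ₗ lTensor M (rTensor A (pairCD (k := k) (C := C)))
  ∘ₗ lTensor M (TensorProduct.assoc k C (Module.Dual k C) A).symm.toLinearMap
  ∘ₗ (TensorProduct.assoc k M C (Module.Dual k C ⊗[k] A)).toLinearMap
  ∘ₗ rTensor (Module.Dual k C ⊗[k] A) coactM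

section Helpers
variable {k A C}
set_option linter.unusedSectionVars false

/-- Evaluation of the second factor. -/
def ev (M : Type*) [AddCommGroup M] [Module k M] (ξ : Module.Dual k C) :
    M ⊗[k] C →ₗ[k] M :=
  (TensorProduct.rid k M).toLinearMap ∘ₗ lTensor M ξ

@[simp] lemma ev_tmul (M : Type*) [AddCommGroup M] [Module k M]
    (ξ : Module.Dual k C) (m : M) (c : C) :
    ev M ξ (m ⊗ₜ[k] c) = ξ c • m := by
  simp [ev]

lemma exists_dualBasis [Module.Finite k C] [Module.Projective k C] :
    ∃ (n : ℕ) (B : Fin n → C) (D : Fin n → Module.Dual k C),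
      ∀ c : C, ∑ i, D i c • B i = c := by
  obtain ⟨n, s, hs⟩ := Module.Finite.exists_fin (R := k) (M := C)
  set π : (Fin n → k) →ₗ[k] C := Fintype.linearCombination k s with hπ
  have hsurj : Function.Surjective π := by
    rw [← range_eq_top, hπ, Fintype.range_linearCombination, hs]
  obtain ⟨σ, hσ⟩ := Module.projective_lifting_property π (LinearMap.id) hsurj
  refine ⟨n, fun i => π (Pi.single i 1), fun i => (LinearMap.proj i) ∘ₗ σ, fun c => ?_⟩
  have h1 : ∀ i, σ c i • π (Pi.single i 1) = π (Pi.single i (σ c i)) := by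
    intro i
    rw [← map_smul]
    congr 1
    rw [← Pi.single_smul, smul_eq_mul, mul_one]
  calc ∑ i, (LinearMap.proj i ∘ₗ σ) c • π (Pi.single i 1)
      = ∑ i, π (Pi.single i (σ c i)) := by
        refine Finset.sum_congr rfl fun i _ => h1 i
    _ = π (∑ i, Pi.single i (σ c i)) := by rw [map_sum]
    _ = π (σ c) := by rw [Finset.univ_sum_single]
    _ = c := congrArg (fun f => f c) hσ

@[simp] lemma evFst_tmul (c : C) (ξ : Module.Dual k C) (a : A) :
    evFst c (ξ ⊗ₜ[k] a) = ξ c • a := by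
  simp [evFst]

@[simp] lemma evSnd_tmul (ξ : Module.Dual k C) (a : A) (c : C) :
    evSnd ξ (a ⊗ₜ[k] c) = ξ c • a := by
  simp [evSnd]

lemma ev_counit_comul (c : C) :
    ev C (Coalgebra.counit (R := k) (A := C)) (Coalgebra.comul c) = c := by
  have h := Coalgebra.lTensor_counit_comp_comul (R := k) (A := C)
  have := congrArg (fun f => (TensorProduct.rid k C) (f c)) h
  simpa [ev] using this

lemma evL_counit_comul (c : C) :
    (TensorProduct.lid k C) ((rTensor C (Coalgebra.counit (R := k) (A := C)))
      (Coalgebra.comul c)) = c := by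
  have h := Coalgebra.rTensor_counit_comp_comul (R := k) (A := C)
  have := congrArg (fun f => (TensorProduct.lid k C) (f c)) h
  simpa using this

lemma mul'_map (f g : Module.Dual k C) (t : C ⊗[k] C) :
    LinearMap.mul' k k (TensorProduct.map f g t) = f (ev C g t) := by
  induction t using TensorProduct.induction_on with
  | zero => simp
  | tmul c c' => simp [mul_comm]
  | add x y hx hy => simp [hx, hy]

lemma mul'_map' (f g : Module.Dual k C) (t : C ⊗[k] C) :
    LinearMap.mul' k k (TensorProduct.map f g t)
      = g ((TensorProduct.lid k C) ((rTensor C f) t)) := by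
  induction t using TensorProduct.induction_on with
  | zero => simp
  | tmul c c' => simp
  | add x y hx hy => simp [hx, hy]

lemma opConv_apply (ξ η : Module.Dual k C) (c : C) :
    opConv k C (ξ ⊗ₜ[k] η) c
      = LinearMap.mul' k k (TensorProduct.map η ξ (Coalgebra.comul c)) := by
  simp [opConv]

lemma opConv_counit_left (η : Module.Dual k C) :
    opConv k C ((Coalgebra.counit (R := k) (A := C)) ⊗ₜ[k] η) = η := by
  ext c
  rw [opConv_apply, mul'_map, ev_counit_comul]

lemma opConv_counit_right (ξ : Module.Dual k C) :
    opConv k C (ξ ⊗ₜ[k] (Coalgebra.counit (R := k) (A := C))) = ξ := by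
  ext c
  rw [opConv_apply, mul'_map', evL_counit_comul]

lemma ev_rTensor {M N : Type*} [AddCommGroup M] [Module k M]
    [AddCommGroup N] [Module k N] (f : M →ₗ[k] N) (ξ : Module.Dual k C)
    (t : M ⊗[k] C) : ev N ξ (rTensor C f t) = f (ev M ξ t) := by
  induction t using TensorProduct.induction_on with
  | zero => simp
  | tmul m c => simp
  | add x y hx hy => simp [hx, hy]

lemma rho_ev {M : Type*} [AddCommGroup M] [Module k M]
    (ρ : M →ₗ[k] M ⊗[k] C) (ξ : Module.Dual k C) (t : M ⊗[k] C) :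
    ρ (ev M ξ t) = ev (M ⊗[k] C) ξ (rTensor C ρ t) := by
  induction t using TensorProduct.induction_on with
  | zero => simp
  | tmul m c => simp
  | add x y hx hy => simp [hx, hy]

lemma ev_ev_assoc {M : Type*} [AddCommGroup M] [Module k M]
    (ξ η : Module.Dual k C) (t : M ⊗[k] C) :
    ev M η (ev (M ⊗[k] C) ξ
      ((TensorProduct.assoc k M C C).symm
        ((lTensor M (Coalgebra.comul (R := k) (A := C))) t)))
      = ev M (opConv k C (ξ ⊗ₜ[k] η)) t := by
  have key : ∀ (m : M) (u : C ⊗[k] C),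
      ev M η (ev (M ⊗[k] C) ξ ((TensorProduct.assoc k M C C).symm (m ⊗ₜ[k] u)))
        = (LinearMap.mul' k k) (TensorProduct.map η ξ u) • m := by
    intro m u
    induction u using TensorProduct.induction_on with
    | zero => simp
    | tmul c c' => simp [mul_comm, mul_smul]
    | add x y hx hy => simp [tmul_add, hx, hy, add_smul]
  induction t using TensorProduct.induction_on with
  | zero => simp
  | tmul m c => rw [lTensor_tmul, key, ev_tmul, opConv_apply]
  | add x y hx hy => simp only [map_add, hx, hy]

/-- The smash multiplication on pure tensors, in terms of `ψbar`. -/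
lemma smashMul_tmul (ψbar : A ⊗[k] Module.Dual k C →ₗ[k] Module.Dual k C ⊗[k] A)
    (ξ η : Module.Dual k C) (a b : A) :
    smashMul ψbar ((ξ ⊗ₜ[k] a) ⊗ₜ[k] (η ⊗ₜ[k] b))
      = TensorProduct.map
          ((opConv k C) ∘ₗ (TensorProduct.mk k (Module.Dual k C) (Module.Dual k C) ξ))
          (LinearMap.mulRight k b) (ψbar (a ⊗ₜ[k] η)) := by
  simp only [smashMul, LinearMap.comp_apply, LinearEquiv.coe_coe,
    TensorProduct.assoc_tmul, lTensor_tmul, TensorProduct.assoc_symm_tmul,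
    rTensor_tmul]
  generalize ψbar (a ⊗ₜ[k] η) = w
  induction w using TensorProduct.induction_on with
  | zero =>
      simp only [TensorProduct.zero_tmul, TensorProduct.tmul_zero,
        LinearEquiv.map_zero, LinearMap.map_zero]
  | tmul η' a' => simp [TensorProduct.mk_apply]
  | add x y hx hy => simp only [add_tmul, tmul_add, map_add, hx, hy]

lemma pairCD_tmul (c : C) (ξ : Module.Dual k C) :
    pairCD (c ⊗ₜ[k] ξ) = ξ c := rfl

lemma induced_tmul {M : Type*} [AddCommGroup M] [Module k M]
    (actM : M ⊗[k] A →ₗ[k] M) (coactM : M →ₗ[k] M ⊗[k] C)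
    (m : M) (ξ : Module.Dual k C) (a : A) :
    inducedSmashAction actM coactM (m ⊗ₜ[k] (ξ ⊗ₜ[k] a))
      = actM (ev M ξ (coactM m) ⊗ₜ[k] a) := by
  simp only [inducedSmashAction, LinearMap.comp_apply, rTensor_tmul]
  generalize coactM m = t
  induction t using TensorProduct.induction_on with
  | zero =>
      simp only [TensorProduct.zero_tmul, LinearEquiv.map_zero,
        LinearMap.map_zero]
  | tmul m' c =>
      simp only [TensorProduct.assoc_tmul, lTensor_tmul,
        TensorProduct.assoc_symm_tmul, rTensor_tmul, pairCD_tmul,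
        LinearEquiv.coe_coe, TensorProduct.lid_tmul, ev_tmul,
        TensorProduct.tmul_smul, TensorProduct.smul_tmul']
  | add x y hx hy =>
      simp only [TensorProduct.add_tmul, LinearEquiv.map_add,
        LinearMap.map_add, hx, hy]

lemma act_assoc_apply {M : Type*} [AddCommGroup M] [Module k M]
    {act : M ⊗[k] A →ₗ[k] M} (h : IsRAction act) (m : M) (a b : A) :
    act (act (m ⊗ₜ[k] a) ⊗ₜ[k] b) = act (m ⊗ₜ[k] (a * b)) := by
  have := congrArg (fun f => f (m ⊗ₜ[k] (a ⊗ₜ[k] b))) h.2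
  simpa [LinearMap.mul'_apply] using this.symm

lemma smash_assoc_apply {ψbar : A ⊗[k] Module.Dual k C →ₗ[k] Module.Dual k C ⊗[k] A}
    {M : Type*} [AddCommGroup M] [Module k M]
    {actX : M ⊗[k] (Module.Dual k C ⊗[k] A) →ₗ[k] M}
    (h : IsSmashAction ψbar actX) (m : M)
    (x y : Module.Dual k C ⊗[k] A) :
    actX (actX (m ⊗ₜ[k] x) ⊗ₜ[k] y) = actX (m ⊗ₜ[k] smashMul ψbar (x ⊗ₜ[k] y)) := by
  have := congrArg (fun f => f (m ⊗ₜ[k] (x ⊗ₜ[k] y))) h.2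
  simpa using this.symm

lemma ev_counit_coact {M : Type*} [AddCommGroup M] [Module k M]
    {coact : M →ₗ[k] M ⊗[k] C} (h : IsRCoaction coact) (m : M) :
    ev M (Coalgebra.counit (R := k) (A := C)) (coact m) = m := h.1 m

lemma delta_delta {M : Type*} [AddCommGroup M] [Module k M]
    {coact : M →ₗ[k] M ⊗[k] C} (h : IsRCoaction coact)
    (ξ η : Module.Dual k C) (m : M) :
    ev M η (coact (ev M ξ (coact m)))
      = ev M (opConv k C (ξ ⊗ₜ[k] η)) (coact m) := by
  rw [rho_ev coact ξ (coact m)]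
  have h2 := congrArg (fun f => f m) h.2
  simp only [LinearMap.comp_apply, LinearEquiv.coe_coe] at h2
  rw [h2]
  exact ev_ev_assoc ξ η (coact m)

lemma ev_psi_block (E : Entwining k A C) {M : Type*} [AddCommGroup M] [Module k M]
    (act : M ⊗[k] A →ₗ[k] M) (a : A) (ξ : Module.Dual k C) (t : M ⊗[k] C) :
    ev M ξ ((rTensor C act)
      ((TensorProduct.assoc k M A C).symm
        ((lTensor M E.psi) ((TensorProduct.assoc k M C A) (t ⊗ₜ[k] a)))))
      = act ((lTensor M (evSnd ξ ∘ₗ E.psi ∘ₗ (TensorProduct.mk k C A).flip a)) t) := by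
  have key : ∀ (m : M) (w : A ⊗[k] C),
      ev M ξ ((rTensor C act) ((TensorProduct.assoc k M A C).symm (m ⊗ₜ[k] w)))
        = act (m ⊗ₜ[k] evSnd ξ w) := by
    intro m w
    induction w using TensorProduct.induction_on with
    | zero => simp
    | tmul a' c' => simp [tmul_smul]
    | add x y hx hy => simp [tmul_add, hx, hy]
  induction t using TensorProduct.induction_on with
  | zero =>
      simp only [TensorProduct.zero_tmul, LinearEquiv.map_zero, LinearMap.map_zero]
  | tmul m c =>
      rw [TensorProduct.assoc_tmul, lTensor_tmul, key, lTensor_tmul]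
      simp
  | add x y hx hy =>
      simp only [TensorProduct.add_tmul, LinearEquiv.map_add, LinearMap.map_add,
        hx, hy]

variable {n : ℕ} in
/-- Candidate coaction on a right `X`-module. -/
def coactOf {M : Type*} [AddCommGroup M] [Module k M]
    (B : Fin n → C) (D : Fin n → Module.Dual k C)
    (actX : M ⊗[k] (Module.Dual k C ⊗[k] A) →ₗ[k] M) : M →ₗ[k] M ⊗[k] C :=
  ∑ i, ((TensorProduct.mk k M C).flip (B i)) ∘ₗ actX
    ∘ₗ ((TensorProduct.mk k M (Module.Dual k C ⊗[k] A)).flip ((D i) ⊗ₜ[k] (1 : A)))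

variable {n : ℕ} in
lemma coactOf_apply {M : Type*} [AddCommGroup M] [Module k M]
    (B : Fin n → C) (D : Fin n → Module.Dual k C)
    (actX : M ⊗[k] (Module.Dual k C ⊗[k] A) →ₗ[k] M) (m : M) :
    coactOf B D actX m = ∑ i, (actX (m ⊗ₜ[k] ((D i) ⊗ₜ[k] (1 : A)))) ⊗ₜ[k] B i := by
  simp [coactOf]

section DB
variable {n : ℕ} {B : Fin n → C} {D : Fin n → Module.Dual k C}
variable (hBD : ∀ c : C, ∑ i, D i c • B i = c)
include hBD

lemma sum_dual_eq (ξ : Module.Dual k C) : ∑ i, ξ (B i) • D i = ξ := by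
  ext c
  simp only [LinearMap.sum_apply, LinearMap.smul_apply, smul_eq_mul]
  conv_rhs => rw [← hBD c]
  simp only [map_sum, map_smul, smul_eq_mul]
  exact Finset.sum_congr rfl fun i _ => mul_comm _ _

/-- Reconstruction of a tensor in `M ⊗ C` from its evaluations. -/
lemma recon (M : Type*) [AddCommGroup M] [Module k M] (t : M ⊗[k] C) :
    ∑ i, (ev M (D i) t) ⊗ₜ[k] B i = t := by
  have h : (∑ i, (TensorProduct.mk k M C).flip (B i) ∘ₗ ev M (D i)) = LinearMap.id := by
    apply TensorProduct.ext'
    intro m c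
    simp only [LinearMap.sum_apply, LinearMap.comp_apply, ev_tmul, id_apply,
      TensorProduct.mk_apply, flip_apply, TensorProduct.smul_tmul', TensorProduct.smul_tmul]
    rw [← tmul_sum, hBD]
  have := congrArg (fun f => f t) h
  simpa using this

lemma ev_inj (M : Type*) [AddCommGroup M] [Module k M] {s t : M ⊗[k] C}
    (h : ∀ i, ev M (D i) s = ev M (D i) t) : s = t := by
  rw [← recon hBD M s, ← recon hBD M t]
  exact Finset.sum_congr rfl fun i _ => by rw [h i]

lemma recon' (t : Module.Dual k C ⊗[k] A) :
    ∑ i, (D i) ⊗ₜ[k] evFst (B i) t = t := by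
  have h : (∑ i, (TensorProduct.mk k (Module.Dual k C) A (D i)) ∘ₗ evFst (B i))
      = LinearMap.id := by
    apply TensorProduct.ext'
    intro ξ a
    simp only [LinearMap.sum_apply, LinearMap.comp_apply, evFst_tmul,
      TensorProduct.mk_apply, id_apply, TensorProduct.tmul_smul,
      TensorProduct.smul_tmul']
    rw [← TensorProduct.sum_tmul, sum_dual_eq hBD]
  have := congrArg (fun f => f t) h
  simpa using this

variable {E : Entwining k A C}
  {ψbar : A ⊗[k] Module.Dual k C →ₗ[k] Module.Dual k C ⊗[k] A}
  (hfact : IsFactorisation E ψbar)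
include hfact

lemma psibar_eq (a : A) (ξ : Module.Dual k C) :
    ψbar (a ⊗ₜ[k] ξ) = ∑ i, (D i) ⊗ₜ[k] evSnd ξ (E.psi (B i ⊗ₜ[k] a)) := by
  conv_lhs => rw [← recon' hBD (ψbar (a ⊗ₜ[k] ξ))]
  exact Finset.sum_congr rfl fun i _ => by rw [hfact a ξ (B i)]

lemma psibar_counit (a : A) :
    ψbar (a ⊗ₜ[k] (Coalgebra.counit (R := k) (A := C)))
      = (Coalgebra.counit (R := k) (A := C)) ⊗ₜ[k] a := by
  rw [psibar_eq hBD hfact]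
  have h : ∀ i : Fin n, evSnd (Coalgebra.counit (R := k) (A := C))
      (E.psi (B i ⊗ₜ[k] a)) = Coalgebra.counit (R := k) (B i) • a := by
    intro i
    have := E.counit_compat (B i) a
    simpa [evSnd] using this
  simp only [h, TensorProduct.tmul_smul, TensorProduct.smul_tmul']
  rw [← TensorProduct.sum_tmul, sum_dual_eq hBD]

lemma psibar_one (η : Module.Dual k C) :
    ψbar ((1 : A) ⊗ₜ[k] η) = η ⊗ₜ[k] (1 : A) := by
  rw [psibar_eq hBD hfact]
  have h : ∀ i : Fin n, evSnd η (E.psi (B i ⊗ₜ[k] (1 : A))) = η (B i) • (1 : A) := by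
    intro i
    rw [E.one_compat (B i), evSnd_tmul]
  simp only [h, TensorProduct.tmul_smul, TensorProduct.smul_tmul']
  rw [← TensorProduct.sum_tmul, sum_dual_eq hBD]

lemma smashMul_AA (a b : A) :
    smashMul ψbar (((Coalgebra.counit (R := k) (A := C)) ⊗ₜ[k] a)
        ⊗ₜ[k] ((Coalgebra.counit (R := k) (A := C)) ⊗ₜ[k] b))
      = (Coalgebra.counit (R := k) (A := C)) ⊗ₜ[k] (a * b) := by
  rw [smashMul_tmul, psibar_counit hBD hfact]
  simp only [TensorProduct.map_tmul, LinearMap.comp_apply,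
    TensorProduct.mk_apply, LinearMap.mulRight_apply]
  rw [opConv_counit_left]

lemma smashMul_BX (ξ η : Module.Dual k C) (b : A) :
    smashMul ψbar ((ξ ⊗ₜ[k] (1 : A)) ⊗ₜ[k] (η ⊗ₜ[k] b))
      = (opConv k C (ξ ⊗ₜ[k] η)) ⊗ₜ[k] b := by
  rw [smashMul_tmul, psibar_one hBD hfact]
  simp only [TensorProduct.map_tmul, LinearMap.comp_apply,
    TensorProduct.mk_apply, LinearMap.mulRight_apply, one_mul]

lemma smashMul_BA (ξ : Module.Dual k C) (b : A) :
    smashMul ψbar ((ξ ⊗ₜ[k] (1 : A))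
        ⊗ₜ[k] ((Coalgebra.counit (R := k) (A := C)) ⊗ₜ[k] b))
      = ξ ⊗ₜ[k] b := by
  rw [smashMul_BX hBD hfact, opConv_counit_right]

lemma smashMul_cross (a : A) (ξ : Module.Dual k C) :
    smashMul ψbar (((Coalgebra.counit (R := k) (A := C)) ⊗ₜ[k] a)
        ⊗ₜ[k] (ξ ⊗ₜ[k] (1 : A)))
      = ψbar (a ⊗ₜ[k] ξ) := by
  rw [smashMul_tmul]
  have h1 : (opConv k C) ∘ₗ (TensorProduct.mk k (Module.Dual k C)
      (Module.Dual k C) (Coalgebra.counit (R := k) (A := C))) = LinearMap.id := by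
    refine LinearMap.ext fun η => ?_
    simp only [LinearMap.comp_apply, TensorProduct.mk_apply, id_apply]
    exact opConv_counit_left η
  have h2 : LinearMap.mulRight k (1 : A) = LinearMap.id := by
    ext x; simp
  rw [h1, h2, TensorProduct.map_id, LinearMap.id_apply]

omit hfact in
lemma lTensor_block_expand {M : Type*} [AddCommGroup M] [Module k M]
    (act : M ⊗[k] A →ₗ[k] M) (E : Entwining k A C) (a : A)
    (ξ : Module.Dual k C) (t : M ⊗[k] C) :
    act ((lTensor M (evSnd ξ ∘ₗ E.psi ∘ₗ (TensorProduct.mk k C A).flip a)) t)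
      = ∑ i, act (ev M (D i) t ⊗ₜ[k] evSnd ξ (E.psi (B i ⊗ₜ[k] a))) := by
  induction t using TensorProduct.induction_on with
  | zero => simp
  | tmul m c =>
      simp only [lTensor_tmul, LinearMap.comp_apply, TensorProduct.mk_apply,
        flip_apply, ev_tmul]
      rw [← map_sum act]
      simp only [TensorProduct.smul_tmul]
      rw [← TensorProduct.tmul_sum]
      have key : ∑ i, (D i) c • evSnd ξ (E.psi (B i ⊗ₜ[k] a))
          = evSnd ξ (E.psi (c ⊗ₜ[k] a)) := by
        calc ∑ i, (D i) c • evSnd ξ (E.psi (B i ⊗ₜ[k] a))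
            = evSnd ξ (E.psi ((∑ i, (D i) c • B i) ⊗ₜ[k] a)) := by
              rw [TensorProduct.sum_tmul, map_sum, map_sum]
              exact Finset.sum_congr rfl fun i _ => by
                rw [← TensorProduct.smul_tmul', map_smul, map_smul]
          _ = evSnd ξ (E.psi (c ⊗ₜ[k] a)) := by rw [hBD]
      rw [key]
  | add x y hx hy => simp only [map_add, hx, hy, ← Finset.sum_add_distrib,
      TensorProduct.add_tmul]

omit hfact in
lemma delta_act {M : Type*} [AddCommGroup M] [Module k M]
    {act : M ⊗[k] A →ₗ[k] M} {coact : M →ₗ[k] M ⊗[k] C}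
    {E : Entwining k A C} (hent : IsEntwinedModule E act coact)
    (m : M) (a : A) (ξ : Module.Dual k C) :
    ev M ξ (coact (act (m ⊗ₜ[k] a)))
      = ∑ i, act (ev M (D i) (coact m) ⊗ₜ[k] evSnd ξ (E.psi (B i ⊗ₜ[k] a))) := by
  have h := congrArg (fun f => ev M ξ (f (m ⊗ₜ[k] a))) hent.2.2
  simp only [LinearMap.comp_apply, LinearEquiv.coe_coe, rTensor_tmul] at h
  rw [h, ev_psi_block, lTensor_block_expand hBD]

lemma ev_coactOf {M : Type*} [AddCommGroup M] [Module k M]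
    (actX : M ⊗[k] (Module.Dual k C ⊗[k] A) →ₗ[k] M)
    (ξ : Module.Dual k C) (m : M) :
    ev M ξ (coactOf B D actX m) = actX (m ⊗ₜ[k] (ξ ⊗ₜ[k] (1 : A))) := by
  rw [coactOf_apply, map_sum]
  simp only [ev_tmul]
  calc ∑ i, ξ (B i) • actX (m ⊗ₜ[k] ((D i) ⊗ₜ[k] (1 : A)))
      = actX (m ⊗ₜ[k] ((∑ i, ξ (B i) • D i) ⊗ₜ[k] (1 : A))) := by
        rw [TensorProduct.sum_tmul, TensorProduct.tmul_sum, map_sum]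
        refine Finset.sum_congr rfl fun i _ => ?_
        rw [← map_smul]
        congr 1
        rw [← TensorProduct.smul_tmul', ← TensorProduct.tmul_smul,
          TensorProduct.smul_tmul']
    _ = actX (m ⊗ₜ[k] (ξ ⊗ₜ[k] (1 : A))) := by rw [sum_dual_eq hBD]

end DB
end Helpers


/-- for `C` f.g. projective, the category of entwined
`(A,C)_ψ`-modules is isomorphic to the category of right `X`-modules,
`X = C^{*op} #_ψ̄ A`. -/
theorem entwined_equiv_smashModules
    [Module.Finite k C] [Module.Projective k C]
    (E : Entwining k A C)
    (ψbar : A ⊗[k] Module.Dual k C →ₗ[k] Module.Dual k C ⊗[k] A)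
    (hfact : IsFactorisation E ψbar) :
    -- (1) every entwined module is a right `X`-module via
    -- `m·(ξ⊗a) = m₍₀₎·a ⟨m₍₁₎,ξ⟩`, compatibly with the `A`-action and coaction:
    (∀ (M : Type) (_ : AddCommGroup M) (_ : Module k M)
      (actM : M ⊗[k] A →ₗ[k] M) (coactM : M →ₗ[k] M ⊗[k] C),
      IsEntwinedModule E actM coactM →
        IsSmashAction ψbar (inducedSmashAction actM coactM) ∧
        (∀ (m : M) (a : A),
          inducedSmashAction actM coactM
            (m ⊗ₜ[k] ((Coalgebra.counit (R := k) (A := C)) ⊗ₜ[k] a))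
            = actM (m ⊗ₜ[k] a)) ∧
        (∀ (m : M) (ξ : Module.Dual k C),
          inducedSmashAction actM coactM (m ⊗ₜ[k] (ξ ⊗ₜ[k] (1 : A)))
            = (TensorProduct.rid k M) ((lTensor M ξ) (coactM m)))) ∧
    -- (2) conversely, every right `X`-module carries a unique entwined module
    -- structure with `A`-action restricted along `A ⊆ X` and coaction determined
    -- by `⟨m₍₁₎, ξ⟩ m₍₀₎ = m·ξ`:
    (∀ (M : Type) (_ : AddCommGroup M) (_ : Module k M)
      (actX : M ⊗[k] (Module.Dual k C ⊗[k] A) →ₗ[k] M),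
      IsSmashAction ψbar actX →
        ∃! coactM : M →ₗ[k] M ⊗[k] C,
          IsEntwinedModule E
            (actX ∘ₗ lTensor M
              ((TensorProduct.mk k (Module.Dual k C) A)
                (Coalgebra.counit (R := k) (A := C))))
            coactM ∧
          (∀ (m : M) (ξ : Module.Dual k C),
            actX (m ⊗ₜ[k] (ξ ⊗ₜ[k] (1 : A)))
              = (TensorProduct.rid k M) ((lTensor M ξ) (coactM m)))) ∧
    -- (3) the correspondence is the identity on morphisms: a `k`-linear map
    -- between entwined modules is `X`-linear iff it is a morphism of entwined
    -- modules:
    (∀ (M : Type) (_ : AddCommGroup M) (_ : Module k M)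
      (N : Type) (_ : AddCommGroup N) (_ : Module k N)
      (actM : M ⊗[k] A →ₗ[k] M) (coactM : M →ₗ[k] M ⊗[k] C)
      (actN : N ⊗[k] A →ₗ[k] N) (coactN : N →ₗ[k] N ⊗[k] C),
      IsEntwinedModule E actM coactM → IsEntwinedModule E actN coactN →
      ∀ f : M →ₗ[k] N,
        ((∀ (m : M) (x : Module.Dual k C ⊗[k] A),
            f (inducedSmashAction actM coactM (m ⊗ₜ[k] x))
              = inducedSmashAction actN coactN (f m ⊗ₜ[k] x))
          ↔ IsEntwinedHom actM coactM actN coactN f)) := by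
  classical
  obtain ⟨n, B, D, hBD⟩ := exists_dualBasis (k := k) (C := C)
  have hsmashOne : smashOne k A C
      = (Coalgebra.counit (R := k) (A := C)) ⊗ₜ[k] (1 : A) := rfl
  refine ⟨?_, ?_, ?_⟩
  -- Part (1)
  · intro M _ _ actM coactM hent
    obtain ⟨hact, hco, hcompat⟩ := hent
    have key : ∀ (m : M) (ξ η : Module.Dual k C) (a b : A),
        inducedSmashAction actM coactM
          (m ⊗ₜ[k] smashMul ψbar ((ξ ⊗ₜ[k] a) ⊗ₜ[k] (η ⊗ₜ[k] b)))
        = inducedSmashAction actM coactM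
          ((inducedSmashAction actM coactM (m ⊗ₜ[k] (ξ ⊗ₜ[k] a))) ⊗ₜ[k] (η ⊗ₜ[k] b)) := by
      intro m ξ η a b
      rw [smashMul_tmul, psibar_eq hBD hfact a η, map_sum]
      simp only [TensorProduct.map_tmul, LinearMap.comp_apply,
        TensorProduct.mk_apply, LinearMap.mulRight_apply]
      rw [TensorProduct.tmul_sum, map_sum]
      simp only [induced_tmul]
      rw [delta_act hBD ⟨hact, hco, hcompat⟩ (ev M ξ (coactM m)) a η,
        TensorProduct.sum_tmul, map_sum]
      refine Finset.sum_congr rfl fun i _ => ?_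
      rw [act_assoc_apply hact, ← delta_delta hco ξ (D i) m]
    refine ⟨⟨?_, ?_⟩, ?_, ?_⟩
    · intro m
      rw [hsmashOne, induced_tmul, ev_counit_coact hco, hact.1]
    · apply TensorProduct.ext'
      intro m w
      simp only [LinearMap.comp_apply, lTensor_tmul, LinearEquiv.coe_coe]
      induction w using TensorProduct.induction_on with
      | zero => simp
      | add u v hu hv =>
          simp only [map_add, TensorProduct.tmul_add, hu, hv]
      | tmul x y =>
          simp only [TensorProduct.assoc_symm_tmul, rTensor_tmul]
          induction x using TensorProduct.induction_on with
          | zero => simp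
          | add u v hu hv =>
              simp only [TensorProduct.add_tmul, TensorProduct.tmul_add,
                map_add, hu, hv]
          | tmul ξ a =>
              induction y using TensorProduct.induction_on with
              | zero => simp
              | add u v hu hv =>
                  simp only [TensorProduct.add_tmul, TensorProduct.tmul_add,
                    map_add, hu, hv]
              | tmul η b => exact key m ξ η a b
    · intro m a
      rw [induced_tmul, ev_counit_coact hco]
    · intro m ξ
      rw [induced_tmul, hact.1]
      simp [ev]
  -- Part (2)
  · intro M _ _ actX hX
    have act_apply : ∀ (m : M) (a : A),
        (actX ∘ₗ lTensor M
          ((TensorProduct.mk k (Module.Dual k C) A)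
            (Coalgebra.counit (R := k) (A := C)))) (m ⊗ₜ[k] a)
          = actX (m ⊗ₜ[k] ((Coalgebra.counit (R := k) (A := C)) ⊗ₜ[k] a)) := by
      intro m a
      simp only [LinearMap.comp_apply, lTensor_tmul, TensorProduct.mk_apply]
    have hev : ∀ (m : M) (ξ : Module.Dual k C),
        actX (m ⊗ₜ[k] (ξ ⊗ₜ[k] (1 : A)))
          = (TensorProduct.rid k M) ((lTensor M ξ) (coactOf B D actX m)) := by
      intro m ξ
      have h2 := ev_coactOf hBD hfact actX ξ m
      simpa [ev] using h2.symm
    refine ⟨coactOf B D actX, ⟨⟨⟨?_, ?_⟩, ⟨?_, ?_⟩, ?_⟩, fun m ξ => hev m ξ⟩, ?_⟩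
    -- A-action: unital
    · intro m
      have h1 := hX.1 m
      rw [hsmashOne] at h1
      exact (act_apply m 1).trans h1
    -- A-action: associativity
    · apply TensorProduct.ext'
      intro m w
      simp only [LinearMap.comp_apply, lTensor_tmul, LinearEquiv.coe_coe]
      induction w using TensorProduct.induction_on with
      | zero => simp
      | add u v hu hv =>
          simp only [map_add, TensorProduct.tmul_add, hu, hv]
      | tmul a b =>
          simp only [LinearMap.mul'_apply, TensorProduct.assoc_symm_tmul,
            rTensor_tmul, TensorProduct.mk_apply, lTensor_tmul,
            LinearMap.comp_apply]
          rw [smash_assoc_apply hX, smashMul_AA hBD hfact]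
    -- coaction: counital
    · intro m
      have h1 := hX.1 m
      rw [hsmashOne] at h1
      have h2 := ev_coactOf hBD hfact actX (Coalgebra.counit (R := k) (A := C)) m
      have h3 : ev M (Coalgebra.counit (R := k) (A := C))
          (coactOf B D actX m) = m := h2.trans h1
      simpa [ev] using h3
    -- coaction: coassociativity
    · apply LinearMap.ext
      intro m
      simp only [LinearMap.comp_apply, LinearEquiv.coe_coe]
      apply ev_inj hBD (M := M ⊗[k] C)
      intro i
      apply ev_inj hBD (M := M)
      intro j
      rw [← rho_ev (coactOf B D actX) (D i) (coactOf B D actX m),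
        ev_coactOf hBD hfact, ev_coactOf hBD hfact,
        ev_ev_assoc (D i) (D j) (coactOf B D actX m), ev_coactOf hBD hfact,
        smash_assoc_apply hX, smashMul_BX hBD hfact]
    -- compatibility
    · apply TensorProduct.ext'
      intro m a
      simp only [LinearMap.comp_apply, LinearEquiv.coe_coe, rTensor_tmul,
        lTensor_tmul, TensorProduct.mk_apply]
      apply ev_inj hBD (M := M)
      intro j
      rw [ev_psi_block E
        (actX ∘ₗ lTensor M ((TensorProduct.mk k (Module.Dual k C) A)
          (Coalgebra.counit (R := k) (A := C)))) a (D j) (coactOf B D actX m),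
        lTensor_block_expand hBD,
        ev_coactOf hBD hfact, smash_assoc_apply hX, smashMul_cross hBD hfact,
        psibar_eq hBD hfact a (D j), TensorProduct.tmul_sum, map_sum]
      refine Finset.sum_congr rfl fun i _ => ?_
      rw [← smashMul_BA hBD hfact (D i) (evSnd (D j) (E.psi (B i ⊗ₜ[k] a))),
        ← smash_assoc_apply hX, ← ev_coactOf hBD hfact actX (D i) m, act_apply]
    -- uniqueness
    · rintro ρ' ⟨-, hev'⟩
      apply LinearMap.ext
      intro m
      rw [← recon hBD M (ρ' m), ← recon hBD M (coactOf B D actX m)]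
      refine Finset.sum_congr rfl fun i _ => ?_
      congr 1
      have h1 := hev' m (D i)
      have h2 := ev_coactOf hBD hfact actX (D i) m
      calc ev M (D i) (ρ' m)
          = (TensorProduct.rid k M) ((lTensor M (D i)) (ρ' m)) := by simp [ev]
        _ = actX (m ⊗ₜ[k] ((D i) ⊗ₜ[k] (1 : A))) := h1.symm
        _ = ev M (D i) (coactOf B D actX m) := h2.symm
  -- Part (3)
  · intro M _ _ N _ _ actM coactM actN coactN hentM hentN f
    obtain ⟨hactM, hcoM, _⟩ := hentM
    obtain ⟨hactN, hcoN, _⟩ := hentN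
    constructor
    · intro h
      constructor
      · apply TensorProduct.ext'
        intro m a
        have h1 := h m ((Coalgebra.counit (R := k) (A := C)) ⊗ₜ[k] a)
        rw [induced_tmul, induced_tmul, ev_counit_coact hcoM,
          ev_counit_coact hcoN] at h1
        simpa using h1
      · apply LinearMap.ext
        intro m
        simp only [LinearMap.comp_apply]
        apply ev_inj hBD
        intro i
        have h1 := h m ((D i) ⊗ₜ[k] (1 : A))
        rw [induced_tmul, induced_tmul, hactM.1, hactN.1] at h1
        rw [ev_rTensor, ← h1]
    · rintro ⟨hA, hC⟩ m x
      have hAapp : ∀ (m' : M) (a : A), f (actM (m' ⊗ₜ[k] a)) = actN (f m' ⊗ₜ[k] a) := by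
        intro m' a
        have := congrArg (fun g => g (m' ⊗ₜ[k] a)) hA
        simpa using this
      have hCapp : ∀ (m' : M) (ξ : Module.Dual k C),
          f (ev M ξ (coactM m')) = ev N ξ (coactN (f m')) := by
        intro m' ξ
        have := congrArg (fun g => ev N ξ (g m')) hC
        simp only [LinearMap.comp_apply] at this
        rw [this, ev_rTensor]
      induction x using TensorProduct.induction_on with
      | zero => simp
      | add u v hu hv => simp only [TensorProduct.tmul_add, map_add, hu, hv]
      | tmul ξ a =>
          rw [induced_tmul, induced_tmul, hAapp, hCapp]
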